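/- Let n and k be integers with 1 ≤ k < n, and let S = {S_1, ..., S_t} be a family of k-element subsets of {1,...,n} whose incidence matrix (the t×n real matrix whose i-th row is the 0-1 indicator vector of S_i) has rank n over the reals. Then S is a resolving set for the Johnson graph J(n,k). -/

import Mathlib

/-- The Johnson graph `J(n,k)`: vertices are the `k`-element subsets of `{1,...,n}`,
two vertices adjacent iff their intersection has `k-1` elements. -/
def johnsonGraph (n k : ℕ) : SimpleGraph {s : Finset (Fin n) // s.card = k} where
  Adj U W := U ≠ W ∧ (U.1 ∩ W.1).card = k - 1
  symm := by
    constructor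
    intro U W h
    exact ⟨h.1.symm, by rw [Finset.inter_comm]; exact h.2⟩
  loopless := by
    constructor
    intro U h
    exact h.1 rfl

/-- The Kneser graph `K(n,k)`: vertices are the `k`-element subsets of `{1,...,n}`,
two vertices adjacent iff the corresponding subsets are disjoint. -/
def kneserGraph (n k : ℕ) : SimpleGraph {s : Finset (Fin n) // s.card = k} where
  Adj U W := U ≠ W ∧ Disjoint U.1 W.1
  symm := by
    constructor
    intro U W h
    exact ⟨h.1.symm, h.2.symm⟩
  loopless := by
    constructor
    intro U h
    exact h.1 rfl

/-- A set `S` of vertices is a resolving set for `G` if every pair of distinct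
vertices is resolved by some vertex of `S`, i.e. is at different distances from it. -/
def resolvingSet {V : Type*} (G : SimpleGraph V) (S : Set V) : Prop :=
  ∀ u v : V, u ≠ v → ∃ x ∈ S, G.dist u x ≠ G.dist v x

/-- The metric dimension `β(G)`: the minimum cardinality of a resolving set for `G`. -/
noncomputable def metricDim {V : Type*} (G : SimpleGraph V) : ℕ :=
  sInf {m | ∃ S : Finset V, resolvingSet G ↑S ∧ S.card = m}

-- upper bound walk
lemma johnson_walk (n k : ℕ) : ∀ d (U W : {s : Finset (Fin n) // s.card = k}),
    (U.1 \ W.1).card = d → ∃ p : (johnsonGraph n k).Walk U W, p.length ≤ d := by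
  intro d
  induction d with
  | zero =>
    intro U W h
    have : U = W := by
      apply Subtype.ext
      apply Finset.eq_of_subset_of_card_le
      · intro x hx
        by_contra hxn
        have : x ∈ U.1 \ W.1 := Finset.mem_sdiff.2 ⟨hx, hxn⟩
        simpa [Finset.card_eq_zero.1 h] using this
      · rw [U.2, W.2]
    subst this
    exact ⟨SimpleGraph.Walk.nil, by simp⟩
  | succ d ih =>
    intro U W h
    have hUW : (U.1 \ W.1).Nonempty := Finset.card_pos.1 (by omega)
    obtain ⟨a, ha⟩ := hUW
    have haU : a ∈ U.1 := (Finset.mem_sdiff.1 ha).1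
    have haW : a ∉ W.1 := (Finset.mem_sdiff.1 ha).2
    have hcard : (W.1 \ U.1).card = d + 1 := by
      have h1 : (U.1 \ W.1).card + (U.1 ∩ W.1).card = U.1.card :=
        Finset.card_sdiff_add_card_inter _ _
      have h2 : (W.1 \ U.1).card + (W.1 ∩ U.1).card = W.1.card :=
        Finset.card_sdiff_add_card_inter _ _
      rw [Finset.inter_comm] at h2
      rw [U.2] at h1; rw [W.2] at h2
      omega
    have hWU : (W.1 \ U.1).Nonempty := Finset.card_pos.1 (by omega)
    obtain ⟨b, hb⟩ := hWU
    have hbW : b ∈ W.1 := (Finset.mem_sdiff.1 hb).1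
    have hbU : b ∉ U.1 := (Finset.mem_sdiff.1 hb).2
    set U' : {s : Finset (Fin n) // s.card = k} :=
      ⟨insert b (U.1.erase a), by
        rw [Finset.card_insert_of_notMem (fun hc => hbU (Finset.mem_of_mem_erase hc)),
          Finset.card_erase_of_mem haU, U.2]
        have : 1 ≤ k := by
          have := Finset.card_pos.2 ⟨a, haU⟩
          omega
        omega⟩ with hU'
    have hadj : (johnsonGraph n k).Adj U U' := by
      constructor
      · intro hc
        rw [hc] at hbU
        exact hbU (Finset.mem_insert_self _ _)
      · have : U.1 ∩ U'.1 = U.1.erase a := by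
          ext x
          simp only [hU', Finset.mem_inter, Finset.mem_insert, Finset.mem_erase]
          constructor
          · rintro ⟨hxU, hx2 | ⟨hxa, _⟩⟩
            · exact absurd (hx2 ▸ hxU) hbU
            · exact ⟨hxa, hxU⟩
          · rintro ⟨hxa, hxU⟩
            exact ⟨hxU, Or.inr ⟨hxa, hxU⟩⟩
        rw [this, Finset.card_erase_of_mem haU, U.2]
    have hsd : (U'.1 \ W.1).card = d := by
      have : U'.1 \ W.1 = (U.1 \ W.1).erase a := by
        rw [hU']
        simp only
        rw [Finset.insert_sdiff_of_mem _ hbW, Finset.erase_sdiff_comm]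
      rw [this, Finset.card_erase_of_mem ha, h]
      omega
    obtain ⟨p, hp⟩ := ih U' W hsd
    exact ⟨SimpleGraph.Walk.cons hadj p, by simpa using by omega⟩

lemma johnson_walk_le (n k : ℕ) (hk : 1 ≤ k) {U W : {s : Finset (Fin n) // s.card = k}}
    (p : (johnsonGraph n k).Walk U W) : k - (U.1 ∩ W.1).card ≤ p.length := by
  induction p with
  | @nil u => simp [Finset.inter_self, u.2]
  | @cons U V W hadj p ih =>
    have h1 : (V.1 ∩ W.1).card ≤ (U.1 ∩ W.1).card + 1 := by
      have hsub : V.1 ∩ W.1 ⊆ (U.1 ∩ W.1) ∪ (V.1 \ U.1) := by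
        intro x hx
        rw [Finset.mem_inter] at hx
        by_cases hxU : x ∈ U.1
        · exact Finset.mem_union_left _ (Finset.mem_inter.2 ⟨hxU, hx.2⟩)
        · exact Finset.mem_union_right _ (Finset.mem_sdiff.2 ⟨hx.1, hxU⟩)
      have h2 : (V.1 \ U.1).card = 1 := by
        have := Finset.card_sdiff_add_card_inter V.1 U.1
        rw [V.2, Finset.inter_comm, hadj.2] at this
        omega
      calc (V.1 ∩ W.1).card ≤ ((U.1 ∩ W.1) ∪ (V.1 \ U.1)).card := Finset.card_le_card hsub
        _ ≤ (U.1 ∩ W.1).card + (V.1 \ U.1).card := Finset.card_union_le _ _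
        _ = (U.1 ∩ W.1).card + 1 := by rw [h2]
    simp only [SimpleGraph.Walk.length_cons]
    omega

lemma johnson_dist (n k : ℕ) (hk : 1 ≤ k) (U W : {s : Finset (Fin n) // s.card = k}) :
    (johnsonGraph n k).dist U W = k - (U.1 ∩ W.1).card := by
  obtain ⟨p, hp⟩ := johnson_walk n k _ U W rfl
  have hr : (johnsonGraph n k).Reachable U W := ⟨p⟩
  have hub : (johnsonGraph n k).dist U W ≤ k - (U.1 ∩ W.1).card := by
    have := SimpleGraph.dist_le p
    have hc : (U.1 \ W.1).card = k - (U.1 ∩ W.1).card := by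
      have := Finset.card_sdiff_add_card_inter U.1 W.1
      rw [U.2] at this
      omega
    omega
  have hlb : k - (U.1 ∩ W.1).card ≤ (johnsonGraph n k).dist U W := by
    obtain ⟨q, hq⟩ := hr.exists_walk_length_eq_dist
    rw [← hq]
    exact johnson_walk_le n k hk q
  omega

/-- If `S = {S_1,...,S_t}` is a family of `k`-subsets of `{1,...,n}` whose incidence
matrix has rank `n` over the reals, then `S` is a resolving set for `J(n,k)`. -/
theorem johnson_resolving_of_rank (n k t : ℕ) (hk : 1 ≤ k) (hkn : k < n)
    (f : Fin t → {s : Finset (Fin n) // s.card = k})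
    (A : Matrix (Fin t) (Fin n) ℝ)
    (hA : ∀ i j, A i j = if j ∈ (f i).1 then 1 else 0)
    (hrank : A.rank = n) :
    resolvingSet (johnsonGraph n k) (Set.range f) := by
  intro u v huv
  by_contra hcon
  push_neg at hcon
  have hdist : ∀ i : Fin t, (johnsonGraph n k).dist u (f i) = (johnsonGraph n k).dist v (f i) :=
    fun i => hcon (f i) ⟨i, rfl⟩
  have hcards : ∀ i : Fin t, (u.1 ∩ (f i).1).card = (v.1 ∩ (f i).1).card := by
    intro i
    have h1 := johnson_dist n k hk u (f i)
    have h2 := johnson_dist n k hk v (f i)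
    have hu : (u.1 ∩ (f i).1).card ≤ k := by
      have := Finset.card_le_card (Finset.inter_subset_left (s₁ := u.1) (s₂ := (f i).1))
      rw [u.2] at this; exact this
    have hv : (v.1 ∩ (f i).1).card ≤ k := by
      have := Finset.card_le_card (Finset.inter_subset_left (s₁ := v.1) (s₂ := (f i).1))
      rw [v.2] at this; exact this
    have := hdist i
    omega
  -- build vector
  set x : Fin n → ℝ := fun j => (if j ∈ u.1 then (1:ℝ) else 0) - (if j ∈ v.1 then 1 else 0) with hx
  have hmul : A.mulVec x = 0 := by
    funext i
    have hsum : ∀ (s : Finset (Fin n)), ∑ j : Fin n, (if j ∈ (f i).1 then (1:ℝ) else 0) * (if j ∈ s then (1:ℝ) else 0) = ((f i).1 ∩ s).card := by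
      intro s
      rw [Finset.card_eq_sum_ones, Nat.cast_sum]
      rw [← Finset.sum_filter_add_sum_filter_not Finset.univ (fun j => j ∈ (f i).1 ∩ s)]
      have h0 : ∑ j ∈ Finset.univ.filter (fun j => ¬ j ∈ (f i).1 ∩ s),
          (if j ∈ (f i).1 then (1:ℝ) else 0) * (if j ∈ s then (1:ℝ) else 0) = 0 := by
        apply Finset.sum_eq_zero
        intro j hj
        simp only [Finset.mem_filter, Finset.mem_inter] at hj
        by_cases h1 : j ∈ (f i).1 <;> by_cases h2 : j ∈ s <;> simp_all
      have h1 : ∑ j ∈ Finset.univ.filter (fun j => j ∈ (f i).1 ∩ s),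
          (if j ∈ (f i).1 then (1:ℝ) else 0) * (if j ∈ s then (1:ℝ) else 0)
          = ∑ j ∈ (f i).1 ∩ s, (1:ℝ) := by
        rw [Finset.filter_mem_eq_inter, Finset.univ_inter]
        apply Finset.sum_congr rfl
        intro j hj
        rw [Finset.mem_inter] at hj
        simp [hj.1, hj.2]
      rw [h0, h1, add_zero]
      push_cast
      rfl
    show ∑ j, A i j * x j = 0
    simp only [hx, hA, mul_sub]
    rw [Finset.sum_sub_distrib, hsum u.1, hsum v.1, Finset.inter_comm (f i).1 u.1,
      Finset.inter_comm (f i).1 v.1, hcards i]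
    ring
  -- injectivity from rank
  have hker : x = 0 := by
    have h1 : LinearMap.ker A.mulVecLin = ⊥ := by
      have hr : Module.finrank ℝ (LinearMap.range A.mulVecLin) = n := hrank
      have := LinearMap.finrank_range_add_finrank_ker A.mulVecLin
      rw [hr] at this
      simp only [Module.finrank_fintype_fun_eq_card, Fintype.card_fin] at this
      have h0 : Module.finrank ℝ (LinearMap.ker A.mulVecLin) = 0 := by omega
      exact Submodule.finrank_eq_zero.1 h0
    have : x ∈ LinearMap.ker A.mulVecLin := by
      rw [LinearMap.mem_ker]
      exact hmul
    rw [h1] at this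
    simpa using this
  apply huv
  apply Subtype.ext
  ext j
  have hxj : x j = 0 := by rw [hker]; rfl
  simp only [hx] at hxj
  by_cases h1 : j ∈ u.1 <;> by_cases h2 : j ∈ v.1 <;> simp_all
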